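/- Let F be a graph and let Q(F) be the graph obtained from a path u1u2u3u4 on 4 vertices by replacing u3 with a copy of F, every vertex of which is adjacent to both u2 and u4. If G is a finite connected Q(F)-free graph and M is a module of G, then at least one of the following holds: the subgraph of G induced by M is F-free; the neighbourhood N(M) is a clique-separator of modules of G; or every vertex of G lies in M or has a neighbour in M (i.e., N²(M) = ∅). -/

import Mathlib

open SimpleGraph

/-- `G` is `H`-free: no induced subgraph of `G` is isomorphic to `H`. -/
def IndFree {α β : Type*} (H : SimpleGraph α) (G : SimpleGraph β) : Prop :=
  ∀ s : Set β, ¬ Nonempty (H ≃g G.induce s)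

/-- The banner: a 4-cycle `0-1-2-3-0` together with a pendant vertex `4` adjacent to `0`. -/
def banner : SimpleGraph (Fin 5) :=
  SimpleGraph.fromEdgeSet {s(0,1), s(1,2), s(2,3), s(3,0), s(0,4)}

/-- The co-banner: the complement of the banner. -/
def coBanner : SimpleGraph (Fin 5) := bannerᶜ

/-- `2K₂`: the disjoint union of two edges. -/
def twoK2 : SimpleGraph (Fin 4) := SimpleGraph.fromEdgeSet {s(0,1), s(2,3)}

/-- `3K₁`: three pairwise nonadjacent vertices. -/
def threeK1 : SimpleGraph (Fin 3) := ⊥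

/-- The 5-wheel: a 5-cycle `0-1-2-3-4-0` plus a hub `5` adjacent to all cycle vertices. -/
def wheel5 : SimpleGraph (Fin 6) :=
  SimpleGraph.fromEdgeSet
    {s(0,1), s(1,2), s(2,3), s(3,4), s(4,0), s(5,0), s(5,1), s(5,2), s(5,3), s(5,4)}

/-- A nonempty set `M` is a module if every vertex outside `M` is adjacent to all
or to none of the vertices of `M`. -/
def IsModule {V : Type*} (G : SimpleGraph V) (M : Set V) : Prop :=
  M.Nonempty ∧ ∀ v ∉ M, (∀ u ∈ M, G.Adj v u) ∨ (∀ u ∈ M, ¬ G.Adj v u)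

/-- `X` is a clique-separator of modules in `G`. -/
def IsCliqueSeparatorOfModules {V : Type*} (G : SimpleGraph V) (X : Set V) : Prop :=
  (∃ (k : ℕ) (Xs : Fin k → Set V),
      (∀ i, IsModule G (Xs i)) ∧
      (∀ i j, i ≠ j → Disjoint (Xs i) (Xs j)) ∧
      (∀ i j, i ≠ j → ∀ u ∈ Xs i, ∀ v ∈ Xs j, G.Adj u v) ∧
      X = ⋃ i, Xs i) ∧
  (∃ A B : Set V, A ∪ B = Set.univ ∧ (A \ B).Nonempty ∧ (B \ A).Nonempty ∧
      (∀ a ∈ A \ B, ∀ b ∈ B \ A, ¬ G.Adj a b) ∧ A ∩ B = X)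

/-- A graph is prime if it has no homogeneous set,
i.e. no module `M` with `1 < |M| < |V(G)|`. -/
def IsPrime {V : Type*} (G : SimpleGraph V) : Prop :=
  ¬ ∃ M : Set V, IsModule G M ∧ 1 < M.ncard ∧ M.ncard < Nat.card V

/-- A nonempty graph is critical if deleting any vertex decreases the chromatic number. -/
def IsCritical {V : Type*} (G : SimpleGraph V) : Prop :=
  Nonempty V ∧ ∀ v : V, (G.induce {u | u ≠ v}).chromaticNumber < G.chromaticNumber

/-- `G` is a `non-empty, 2K₁-free'-expansion of `G'`: the fibres of `f` partition `V(G)`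
into nonempty cliques, with complete/empty bipartite connections according to `G'`. -/
def IsExpansionOf {V W : Type*} (G : SimpleGraph V) (G' : SimpleGraph W) : Prop :=
  ∃ f : V → W, Function.Surjective f ∧
    (∀ u v, u ≠ v → f u = f v → G.Adj u v) ∧
    (∀ u v, f u ≠ f v → (G.Adj u v ↔ G'.Adj (f u) (f v)))

/-- The weighted chromatic number `χ_q(G)`: the least `k` such that every vertex `v`
can be assigned a set of `q v` colours from `{1,…,k}` with disjoint sets on adjacent
vertices. -/
noncomputable def wChromaticNumber {V : Type*} (G : SimpleGraph V) (q : V → ℕ) : ℕ :=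
  sInf {k | ∃ L : V → Finset (Fin k), (∀ v, (L v).card = q v) ∧
    ∀ ⦃u v⦄, G.Adj u v → Disjoint (L u) (L v)}

/-- The weighted clique number `ω_q(G)`: the maximum total weight of a clique. -/
noncomputable def wCliqueNum {V : Type*} (G : SimpleGraph V) (q : V → ℕ) : ℕ :=
  sSup {m | ∃ s : Finset V, G.IsClique (s : Set V) ∧ m = ∑ v ∈ s, q v}

/-- `Q(F)`: a path `u₁u₂u₃u₄` whose third vertex `u₃` has been replaced by a copy of `F`,
each of whose vertices is adjacent to both `u₂` and `u₄`. Here `inr 0 = u₁`, `inr 1 = u₂`,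
`inr 2 = u₄`, and `inl w` are the vertices of the copy of `F`. -/
def QGraph {W : Type*} (F : SimpleGraph W) : SimpleGraph (W ⊕ Fin 3) :=
  SimpleGraph.fromRel (fun a b =>
    (∃ w w', a = Sum.inl w ∧ b = Sum.inl w' ∧ F.Adj w w') ∨
    (a = Sum.inr 0 ∧ b = Sum.inr 1) ∨
    (∃ w, a = Sum.inl w ∧ (b = Sum.inr 1 ∨ b = Sum.inr 2)))

/-- The join of two graphs: all edges of both graphs plus all edges in between. -/
def joinGraph {α β : Type*} (G₁ : SimpleGraph α) (G₂ : SimpleGraph β) :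
    SimpleGraph (α ⊕ β) :=
  SimpleGraph.fromRel (fun a b =>
    (∃ u v, a = Sum.inl u ∧ b = Sum.inl v ∧ G₁.Adj u v) ∨
    (∃ u v, a = Sum.inr u ∧ b = Sum.inr v ∧ G₂.Adj u v) ∨
    (∃ u v, a = Sum.inl u ∧ b = Sum.inr v))

/-- `H` has a spanning complete bipartite subgraph. -/
def HasSpanningCompleteBipartite {α : Type*} (H : SimpleGraph α) : Prop :=
  ∃ A B : Set α, A.Nonempty ∧ B.Nonempty ∧ Disjoint A B ∧ A ∪ B = Set.univ ∧
    ∀ a ∈ A, ∀ b ∈ B, H.Adj a b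

/-- `G'` is a `q`-expansion of `G`: each vertex `u` of `G` is replaced by a clique on
`q u` vertices, joined completely or not at all according to adjacency in `G`. -/
def IsWeightedExpansion {V' V : Type*} (G' : SimpleGraph V') (G : SimpleGraph V)
    (q : V → ℕ) : Prop :=
  ∃ f : V' → V,
    (∀ v : V, Nat.card (f ⁻¹' {v}) = q v) ∧
    (∀ a b : V', a ≠ b → f a = f b → G'.Adj a b) ∧
    (∀ a b : V', f a ≠ f b → (G'.Adj a b ↔ G.Adj (f a) (f b)))

/-- `q` is `⊲`-minimal: no weight function pointwise at most `q` with strictly smaller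
total weight has the same weighted chromatic number. -/
def IsTriMinimal {V : Type*} [Fintype V] (G : SimpleGraph V) (q : V → ℕ) : Prop :=
  ¬ ∃ q' : V → ℕ, (∀ v, q' v ≤ q v) ∧ (∑ v, q' v) < (∑ v, q v) ∧
      wChromaticNumber G q' = wChromaticNumber G q

lemma qgraph_adj_ll {W : Type*} (F : SimpleGraph W) (w w' : W) :
    (QGraph F).Adj (Sum.inl w) (Sum.inl w') ↔ F.Adj w w' := by
  simp only [QGraph, fromRel_adj]
  constructor
  · rintro ⟨hne, h | h⟩ <;>
      rcases h with ⟨w1, w2, h1, h2, h3⟩ | ⟨h1, h2⟩ | ⟨w1, h1, h2 | h2⟩ <;> simp_all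
    exact h3.symm
  · intro h
    exact ⟨by simp [h.ne], Or.inl (Or.inl ⟨w, w', rfl, rfl, h⟩)⟩

lemma qgraph_adj_lr {W : Type*} (F : SimpleGraph W) (w : W) (i : Fin 3) :
    (QGraph F).Adj (Sum.inl w) (Sum.inr i) ↔ i ≠ 0 := by
  simp only [QGraph, fromRel_adj]
  constructor
  · rintro ⟨hne, h | h⟩ <;>
      rcases h with ⟨w1, w2, h1, h2, h3⟩ | ⟨h1, h2⟩ | ⟨w1, h1, h2 | h2⟩ <;> simp_all
  · intro h
    refine ⟨by simp, Or.inl (Or.inr (Or.inr ⟨w, rfl, ?_⟩))⟩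
    fin_cases i <;> simp_all

lemma qgraph_adj_rr {W : Type*} (F : SimpleGraph W) (i j : Fin 3) :
    (QGraph F).Adj (Sum.inr i) (Sum.inr j) ↔ (i = 0 ∧ j = 1) ∨ (i = 1 ∧ j = 0) := by
  simp only [QGraph, fromRel_adj]
  constructor
  · rintro ⟨hne, h | h⟩ <;>
      rcases h with ⟨w1, w2, h1, h2, h3⟩ | ⟨h1, h2⟩ | ⟨w1, h1, h2 | h2⟩ <;> simp_all
  · rintro (⟨rfl, rfl⟩ | ⟨rfl, rfl⟩)
    · exact ⟨by simp, Or.inl (Or.inr (Or.inl ⟨rfl, rfl⟩))⟩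
    · exact ⟨by simp, Or.inr (Or.inr (Or.inl ⟨rfl, rfl⟩))⟩

lemma not_indFree_iff {α β : Type*} {H : SimpleGraph α} {G : SimpleGraph β} :
    ¬ IndFree H G ↔ ∃ g : α → β, Function.Injective g ∧
      ∀ u v, H.Adj u v ↔ G.Adj (g u) (g v) := by
  constructor
  · intro h
    simp only [IndFree, not_forall, not_not] at h
    obtain ⟨s, ⟨e⟩⟩ := h
    refine ⟨fun u => (e u : β), fun u v huv => e.toEquiv.injective (Subtype.ext huv), ?_⟩
    intro u v
    rw [← e.map_rel_iff]
    simp [comap_adj]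
  · rintro ⟨g, hinj, hiff⟩ h
    refine h (Set.range g) ⟨⟨Equiv.ofInjective g hinj, ?_⟩⟩
    intro u v
    simp [Equiv.ofInjective, comap_adj, ← hiff]

lemma keyK {W V : Type*} {F : SimpleGraph W} {G : SimpleGraph V}
    (hfree : IndFree (QGraph F) G)
    (g : W → V) (hginj : Function.Injective g)
    (hgadj : ∀ u w, F.Adj u w ↔ G.Adj (g u) (g w))
    (v a b : V)
    (hva : G.Adj v a) (hvb : ¬ G.Adj v b) (hab : ¬ G.Adj a b)
    (hvna : v ≠ a) (hvnb : v ≠ b) (habne : a ≠ b)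
    (hag : ∀ w, G.Adj a (g w)) (hbg : ∀ w, G.Adj b (g w))
    (hvg : ∀ w, ¬ G.Adj v (g w))
    (hvng : ∀ w, v ≠ g w) (hang : ∀ w, a ≠ g w) (hbng : ∀ w, b ≠ g w) :
    False := by
  apply not_indFree_iff.mpr ?_ hfree
  have hbv : ¬ G.Adj b v := fun h => hvb h.symm
  have hba : ¬ G.Adj b a := fun h => hab h.symm
  have hav : G.Adj a v := hva.symm
  have hgv : ∀ w, ¬ G.Adj (g w) v := fun w h => hvg w h.symm
  have hga : ∀ w, G.Adj (g w) a := fun w => (hag w).symm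
  have hgb : ∀ w, G.Adj (g w) b := fun w => (hbg w).symm
  set f : W ⊕ Fin 3 → V :=
    fun x => Sum.elim g (fun i => if i = 0 then v else if i = 1 then a else b) x with hf
  have hfr : ∀ i : Fin 3, f (Sum.inr i) = if i = 0 then v else if i = 1 then a else b :=
    fun i => rfl
  have hmem : ∀ i : Fin 3, f (Sum.inr i) = v ∨ f (Sum.inr i) = a ∨ f (Sum.inr i) = b := by
    intro i; fin_cases i <;> simp [hfr]
  refine ⟨f, ?_, ?_⟩
  · rintro (w | i) (w' | j) h
    · simp only [hf, Sum.elim_inl] at h; exact congrArg Sum.inl (hginj h)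
    · exfalso
      have : f (Sum.inl w) = g w := rfl
      rw [this] at h
      rcases hmem j with e | e | e <;> rw [e] at h
      · exact hvng w h.symm
      · exact hang w h.symm
      · exact hbng w h.symm
    · exfalso
      have : f (Sum.inl w') = g w' := rfl
      rw [this] at h
      rcases hmem i with e | e | e <;> rw [e] at h
      · exact hvng w' h
      · exact hang w' h
      · exact hbng w' h
    · have hi := hfr i; have hj := hfr j
      fin_cases i <;> fin_cases j <;> simp_all
  · rintro (w | i) (w' | j)
    · rw [qgraph_adj_ll]; exact hgadj w w'
    · rw [qgraph_adj_lr]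
      have : f (Sum.inl w) = g w := rfl
      rw [this]
      fin_cases j <;> simp [hfr, hgv w, hga w, hgb w]
    · rw [(QGraph F).adj_comm, qgraph_adj_lr]
      have : f (Sum.inl w') = g w' := rfl
      rw [this, G.adj_comm]
      fin_cases i <;> simp [hfr, hgv w', hga w', hgb w']
    · rw [qgraph_adj_rr]
      fin_cases i <;> fin_cases j <;>
        simp_all [hfr, hva, hav, hvb, hab, hbv, hba]

-- walk lemma
lemma walkFind {α : Type*} {H : SimpleGraph α} {P : α → Prop} :
    ∀ {a b : α}, H.Walk a b → P a → ¬ P b →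
      ∃ x y : α, H.Adj x y ∧ P x ∧ ¬ P y ∧ H.Reachable a x := by
  intro a b w
  induction w with
  | nil => intro pa pb; exact absurd pa pb
  | @cons a c b h p ih =>
    intro pa pb
    by_cases hc : P c
    · obtain ⟨x, y, hxy, px, py, hr⟩ := ih hc pb
      exact ⟨x, y, hxy, px, py, (h.reachable).trans hr⟩
    · exact ⟨a, c, h, pa, hc, Reachable.refl a⟩

theorem stmt12' {W V : Type*} [Fintype V] (F : SimpleGraph W) (G : SimpleGraph V)
    (hfree : ∀ (g : W → V) (_ : Function.Injective g)
      (_ : ∀ u w, F.Adj u w ↔ G.Adj (g u) (g w)) (v a b : V),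
      G.Adj v a → ¬ G.Adj v b → ¬ G.Adj a b → v ≠ a → v ≠ b → a ≠ b →
      (∀ w, G.Adj a (g w)) → (∀ w, G.Adj b (g w)) → (∀ w, ¬ G.Adj v (g w)) →
      (∀ w, v ≠ g w) → (∀ w, a ≠ g w) → (∀ w, b ≠ g w) → False)
    (M : Set V) (hM : IsModule G M) :
    IndFree F (G.induce M) ∨
    IsCliqueSeparatorOfModules G {v | v ∉ M ∧ ∃ u ∈ M, G.Adj v u} ∨
    (∀ v : V, v ∈ M ∨ ∃ u ∈ M, G.Adj v u) := by
  classical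
  by_contra hcon
  push_neg at hcon
  obtain ⟨h1, h2, z, hzM, hzN⟩ := hcon
  -- the copy of F in M
  have h1' : ∃ g : W → ↥M, Function.Injective g ∧
      ∀ u v, F.Adj u v ↔ (G.induce M).Adj (g u) (g v) := by
    simp only [IndFree, not_forall, not_not] at h1
    obtain ⟨s, ⟨e⟩⟩ := h1
    refine ⟨fun u => (e u : ↥M), fun u v huv => e.toEquiv.injective (Subtype.ext huv), ?_⟩
    intro u v
    rw [← e.map_rel_iff]
    simp [comap_adj]
  obtain ⟨g0, hg0inj, hg0adj⟩ := h1'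
  set g : W → V := fun w => (g0 w : V) with hgdef
  have hginj : Function.Injective g := fun u v h =>
    hg0inj (Subtype.ext h)
  have hgadj : ∀ u w, F.Adj u w ↔ G.Adj (g u) (g w) := by
    intro u w
    rw [hg0adj u w]
    simp [comap_adj, hgdef]
  have hgM : ∀ w, g w ∈ M := fun w => (g0 w).2
  set N : Set V := {v | v ∉ M ∧ ∃ u ∈ M, G.Adj v u} with hNdef
  -- vertices in N are complete to M
  have hNM : ∀ x ∈ N, ∀ u ∈ M, G.Adj x u := by
    intro x hx u hu
    rcases hM.2 x hx.1 with h | h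
    · exact h u hu
    · obtain ⟨u0, hu0, hadj⟩ := hx.2
      exact absurd hadj (h u0 hu0)
  -- key consequence of Q(F)-freeness
  have K : ∀ a ∈ N, ∀ b ∈ N, a ≠ b → ¬ G.Adj a b →
      ∀ v, v ∉ M → (∀ u ∈ M, ¬ G.Adj v u) → G.Adj v a → G.Adj v b := by
    intro a ha b hb hne hab v hvM hvN hva
    by_contra hvb
    refine hfree g hginj hgadj v a b hva hvb hab hva.ne ?_ hne
      (fun w => hNM a ha (g w) (hgM w)) (fun w => hNM b hb (g w) (hgM w))
      (fun w => hvN (g w) (hgM w))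
      (fun w h => hvM (h ▸ hgM w)) (fun w h => ha.1 (h ▸ hgM w))
      (fun w h => hb.1 (h ▸ hgM w))
    rintro rfl
    obtain ⟨u, hu, hadj⟩ := hb.2
    exact hvN u hu hadj
  -- anticomponents of N
  set H : SimpleGraph ↥N := (G.induce N)ᶜ with hHdef
  haveI : Finite ↥N := Finite.Set.finite_sep _ _
  haveI : Finite H.ConnectedComponent :=
    Finite.of_surjective H.connectedComponentMk (fun c => c.exists_rep)
  set k : ℕ := Nat.card H.ConnectedComponent with hk
  set e : H.ConnectedComponent ≃ Fin k := Finite.equivFin _ with he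
  set Xs : Fin k → Set V :=
    fun i => {x : V | ∃ hx : x ∈ N, H.connectedComponentMk ⟨x, hx⟩ = e.symm i} with hXs
  have cross : ∀ x y : ↥N, H.connectedComponentMk x ≠ H.connectedComponentMk y →
      G.Adj x y := by
    intro x y hne
    have hxy : x ≠ y := fun h => hne (by rw [h])
    have hnadj : ¬ H.Adj x y := fun h => hne (ConnectedComponent.sound h.reachable)
    rw [hHdef, compl_adj] at hnadj
    push_neg at hnadj
    simpa [comap_adj] using hnadj hxy
  have hadj_of_H : ∀ x y : ↥N, H.Adj x y → (x : V) ≠ y ∧ ¬ G.Adj x y := by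
    intro x y h
    rw [hHdef, compl_adj] at h
    exact ⟨fun hv => h.1 (Subtype.ext hv), by simpa [comap_adj] using h.2⟩
  -- each anticomponent is a module
  have hmod : ∀ i, IsModule G (Xs i) := by
    intro i
    constructor
    · obtain ⟨x, hx⟩ := (e.symm i).exists_rep
      exact ⟨x.1, x.2, hx⟩
    · intro v hv
      by_contra hc
      push_neg at hc
      obtain ⟨⟨b0, hb0, hvb0⟩, a0, ha0, hva0⟩ := hc
      obtain ⟨haN, haC⟩ := ha0
      obtain ⟨hbN, hbC⟩ := hb0
      have hreach : H.Reachable ⟨a0, haN⟩ ⟨b0, hbN⟩ :=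
        ConnectedComponent.exact (haC.trans hbC.symm)
      obtain ⟨p⟩ := hreach
      obtain ⟨x, y, hxy, hpx, hpy, hrx⟩ :=
        walkFind (P := fun t : ↥N => G.Adj v t.1) p hva0 hvb0
      have hxC : H.connectedComponentMk x = e.symm i := by
        rw [← haC]; exact (ConnectedComponent.sound hrx).symm
      have hyC : H.connectedComponentMk y = e.symm i := by
        rw [← hxC]; exact (ConnectedComponent.sound hxy.reachable).symm
      obtain ⟨hvalne, hGxy⟩ := hadj_of_H x y hxy
      by_cases hvM : v ∈ M
      · exact hpy ((hNM y.1 y.2 v hvM).symm)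
      · by_cases hvN : v ∈ N
        · by_cases hvC : H.connectedComponentMk ⟨v, hvN⟩ = e.symm i
          · exact hv ⟨hvN, hvC⟩
          · exact hpy (cross ⟨v, hvN⟩ y (by rw [hyC]; exact hvC))
        · have hvnoM : ∀ u ∈ M, ¬ G.Adj v u := by
            intro u hu hadj
            exact hvN ⟨hvM, u, hu, hadj⟩
          exact hpy (K x.1 x.2 y.1 y.2 hvalne hGxy v hvM hvnoM hpx)
  refine absurd ⟨⟨k, Xs, hmod, ?_, ?_, ?_⟩, M ∪ N, {v | v ∉ M}, ?_, ?_, ?_, ?_, ?_⟩ h2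
  · -- disjoint
    intro i j hij
    rw [Set.disjoint_left]
    rintro x ⟨hx1, hx2⟩ ⟨hx1', hx2'⟩
    exact hij (e.symm.injective (hx2 ▸ hx2'.symm ▸ rfl))
  · -- complete between
    intro i j hij u hu v hv
    obtain ⟨huN, huC⟩ := hu
    obtain ⟨hvN, hvC⟩ := hv
    exact cross ⟨u, huN⟩ ⟨v, hvN⟩ (by rw [huC, hvC]; exact fun h => hij (e.symm.injective h))
  · -- union
    ext x
    simp only [Set.mem_iUnion]
    constructor
    · intro hx
      exact ⟨e (H.connectedComponentMk ⟨x, hx⟩), hx, by simp⟩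
    · rintro ⟨i, hx, _⟩
      exact hx
  · -- A ∪ B = univ
    ext v; by_cases hv : v ∈ M <;> simp [hv]
  · -- A \ B nonempty
    obtain ⟨m, hm⟩ := hM.1
    exact ⟨m, Or.inl hm, fun h => h hm⟩
  · -- B \ A nonempty
    refine ⟨z, hzM, ?_⟩
    rintro (h | h)
    · exact hzM h
    · obtain ⟨u, hu, hadj⟩ := h.2
      exact hzN u hu hadj
  · -- no edges across
    rintro a ⟨haA, haB⟩ b ⟨hbB, hbA⟩ hadj
    have haM : a ∈ M := not_not.mp haB
    exact hbA (Or.inr ⟨hbB, a, haM, hadj.symm⟩)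
  · -- A ∩ B = X
    ext v
    constructor
    · rintro ⟨h | h, hv⟩
      · exact absurd h hv
      · exact h
    · intro h
      exact ⟨Or.inr h, h.1⟩


/-- If `G` is a finite connected `Q(F)`-free graph and `M` is a module of `G`, then
`G[M]` is `F`-free, or `N(M)` is a clique-separator of modules, or `N²(M) = ∅`
(every vertex lies in `M` or has a neighbour in `M`). -/
theorem stmt12 {W V : Type} [Fintype W] [Fintype V] (F : SimpleGraph W)
    (G : SimpleGraph V) (hconn : G.Connected)
    (hfree : IndFree (QGraph F) G) (M : Set V) (hM : IsModule G M) :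
    IndFree F (G.induce M) ∨
    IsCliqueSeparatorOfModules G {v | v ∉ M ∧ ∃ u ∈ M, G.Adj v u} ∨
    (∀ v : V, v ∈ M ∨ ∃ u ∈ M, G.Adj v u) := by
  refine stmt12' F G ?_ M hM
  intro g hginj hgadj v a b h1 h2 h3 h4 h5 h6 h7 h8 h9 h10 h11 h12
  exact keyK hfree g hginj hgadj v a b h1 h2 h3 h4 h5 h6 h7 h8 h9 h10 h11 h12
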